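/- Let K ≥ 1 and N_t ≥ 1 be integers and σ_q ≥ 0. For each ρ > 0, let H be a K × N_t complex matrix with Hᴴ·H = K·I_{N_t}, let x ∈ ℂ^{N_t} be fixed, let n′(ρ) ∈ ℂ^K be a random vector whose entries have mutually independent real and imaginary parts, each Gaussian with mean 0 and variance (1 + σ_q²·ρ/N_t)/2, and define MSE(ρ) = (1/N_t)·E[‖x − √(N_t/ρ)·(1/K)·Hᴴ·(√(ρ/N_t)·H·x + n′(ρ))‖²]. Then MSE(ρ) → σ_q²/K as ρ → ∞. -/

import Mathlib

open MeasureTheory ProbabilityTheory Matrix Filter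
open scoped BigOperators NNReal ENNReal Real

lemma my_gauss_sq_int {b : ℝ} (hb : 0 < b) :
    ∫ x : ℝ, x ^ 2 * Real.exp (-b * x ^ 2) = Real.sqrt π / 2 * b ^ (-(3:ℝ)/2) := by
  have h0 : (fun x : ℝ => x ^ 2 * Real.exp (-b * x ^ 2))
      = fun x : ℝ => |x| ^ 2 * Real.exp (-b * |x| ^ 2) := by
    funext x; simp [sq_abs]
  rw [h0, integral_comp_abs (f := fun y : ℝ => y ^ 2 * Real.exp (-b * y ^ 2))]
  have h1 : ∫ x in Set.Ioi (0:ℝ), x ^ 2 * Real.exp (-b * x ^ 2)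
      = ∫ x in Set.Ioi (0:ℝ), x ^ (2:ℝ) * Real.exp (-b * x ^ (2:ℝ)) := by
    refine MeasureTheory.setIntegral_congr_fun measurableSet_Ioi (fun x hx => ?_)
    rw [show ((2:ℝ)) = ((2:ℕ):ℝ) by norm_num, Real.rpow_natCast]
  rw [h1, integral_rpow_mul_exp_neg_mul_rpow (by norm_num) (by norm_num) hb]
  have h2 : ((2:ℝ) + 1) / 2 = 1/2 + 1 := by norm_num
  rw [h2, Real.Gamma_add_one (by norm_num), Real.Gamma_one_half_eq]
  ring_nf

lemma my_gauss_integral_eq {v : ℝ≥0} (hv : v ≠ 0) (g : ℝ → ℝ) :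
    ∫ x, g x ∂(gaussianReal 0 v) = ∫ x, gaussianPDFReal 0 v x * g x := by
  rw [gaussianReal_of_var_ne_zero _ hv]
  have hd : gaussianPDF 0 v
      = fun x => ((Real.toNNReal (gaussianPDFReal 0 v x) : ℝ≥0) : ℝ≥0∞) := rfl
  rw [hd, integral_withDensity_eq_integral_smul
    ((measurable_gaussianPDFReal 0 v).real_toNNReal) g]
  congr 1 with x
  rw [NNReal.smul_def, smul_eq_mul, Real.coe_toNNReal _ (gaussianPDFReal_nonneg 0 v x)]

lemma my_gauss_mean {v : ℝ≥0} (hv : v ≠ 0) : ∫ x, x ∂(gaussianReal 0 v) = 0 := by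
  rw [my_gauss_integral_eq hv]
  have heven : ∀ x : ℝ, gaussianPDFReal 0 v (-x) = gaussianPDFReal 0 v x := by
    intro x; simp [gaussianPDFReal]
  have h := integral_neg_eq_self (fun x : ℝ => gaussianPDFReal 0 v x * x) volume
  simp only [heven, mul_neg] at h
  rw [integral_neg] at h
  linarith [h]

lemma my_gauss_pdf_eq {v : ℝ≥0} (x : ℝ) :
    gaussianPDFReal 0 v x = (Real.sqrt (2 * π * v))⁻¹ * Real.exp (-(2*(v:ℝ))⁻¹ * x ^ 2) := by
  simp only [gaussianPDFReal, sub_zero]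
  congr 1
  rw [neg_div, div_eq_inv_mul, neg_mul]

lemma my_gauss_moment2 {v : ℝ≥0} (hv : v ≠ 0) :
    ∫ x, x ^ 2 ∂(gaussianReal 0 v) = (v : ℝ) := by
  have hvpos : (0:ℝ) < v := lt_of_le_of_ne (NNReal.coe_nonneg v) (by exact_mod_cast hv.symm)
  have hb : (0:ℝ) < (2*(v:ℝ))⁻¹ := by positivity
  rw [my_gauss_integral_eq hv]
  calc ∫ x : ℝ, gaussianPDFReal 0 v x * x ^ 2
      = ∫ x : ℝ, (Real.sqrt (2 * π * v))⁻¹ * (x ^ 2 * Real.exp (-(2*(v:ℝ))⁻¹ * x ^ 2)) := by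
        congr 1 with x; rw [my_gauss_pdf_eq]; ring
    _ = (Real.sqrt (2 * π * v))⁻¹ * (Real.sqrt π / 2 * ((2*(v:ℝ))⁻¹) ^ (-(3:ℝ)/2)) := by
        rw [integral_const_mul, my_gauss_sq_int hb]
    _ = (v : ℝ) := by
        have h2v : (0:ℝ) < 2*v := by positivity
        rw [← Real.rpow_neg_one (2*(v:ℝ)), ← Real.rpow_mul h2v.le]
        rw [show (-1:ℝ) * (-(3:ℝ)/2) = 1 + 1/2 by norm_num, Real.rpow_add h2v, Real.rpow_one,
          ← Real.sqrt_eq_rpow, show 2*π*(v:ℝ) = π*(2*v) by ring, Real.sqrt_mul Real.pi_pos.le]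
        have hsp : Real.sqrt π ≠ 0 := (Real.sqrt_pos.mpr Real.pi_pos).ne'
        have hs2 : Real.sqrt (2*(v:ℝ)) ≠ 0 := (Real.sqrt_pos.mpr h2v).ne'
        field_simp

lemma my_gauss_integrable_sq {v : ℝ≥0} (hv : v ≠ 0) :
    Integrable (fun x : ℝ => x ^ 2) (gaussianReal 0 v) := by
  have hvpos : (0:ℝ) < v := lt_of_le_of_ne (NNReal.coe_nonneg v) (by exact_mod_cast hv.symm)
  have hb : (0:ℝ) < (2*(v:ℝ))⁻¹ := by positivity
  rw [gaussianReal_of_var_ne_zero _ hv,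
    integrable_withDensity_iff (measurable_gaussianPDF 0 v)
      (Filter.Eventually.of_forall fun x => ENNReal.ofReal_lt_top)]
  have : (fun x : ℝ => x ^ 2 * (gaussianPDF 0 v x).toReal)
      = fun x : ℝ => (Real.sqrt (2 * π * v))⁻¹ * (x ^ 2 * Real.exp (-(2*(v:ℝ))⁻¹ * x ^ 2)) := by
    funext x
    rw [gaussianPDF, ENNReal.toReal_ofReal (gaussianPDFReal_nonneg 0 v x), my_gauss_pdf_eq]
    ring
  rw [this]
  have h2 : Integrable (fun x : ℝ => x ^ (2:ℝ) * Real.exp (-(2*(v:ℝ))⁻¹ * x ^ 2)) volume :=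
    integrable_rpow_mul_exp_neg_mul_sq hb (by norm_num)
  have h3 : Integrable (fun x : ℝ => x ^ 2 * Real.exp (-(2*(v:ℝ))⁻¹ * x ^ 2)) volume := by
    have : (fun x : ℝ => x ^ (2:ℝ) * Real.exp (-(2*(v:ℝ))⁻¹ * x ^ 2))
        = fun x : ℝ => x ^ 2 * Real.exp (-(2*(v:ℝ))⁻¹ * x ^ 2) := by
      funext x; rw [show ((2:ℝ)) = ((2:ℕ):ℝ) by norm_num, Real.rpow_natCast]
    rwa [this] at h2
  exact h3.const_mul _

lemma my_gauss_memLp2 {v : ℝ≥0} (hv : v ≠ 0) :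
    MemLp (id : ℝ → ℝ) 2 (gaussianReal 0 v) :=
  (memLp_two_iff_integrable_sq aestronglyMeasurable_id).2 (my_gauss_integrable_sq hv)

section Key
variable {Ω : Type*} [MeasurableSpace Ω] {P : Measure Ω} [IsProbabilityMeasure P]

lemma my_e_memLp2 {e : Ω → ℝ} (hm : Measurable e) {v : ℝ≥0} (hv : v ≠ 0)
    (hlaw : P.map e = gaussianReal 0 v) : MemLp e 2 P := by
  have h := my_gauss_memLp2 hv
  rw [← hlaw] at h
  exact (memLp_map_measure_iff aestronglyMeasurable_id hm.aemeasurable).1 h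

lemma my_e_mean {e : Ω → ℝ} (hm : Measurable e) {v : ℝ≥0} (hv : v ≠ 0)
    (hlaw : P.map e = gaussianReal 0 v) : ∫ ω, e ω ∂P = 0 := by
  have h := my_gauss_mean (v := v) hv
  rw [← hlaw, integral_map hm.aemeasurable measurable_id'.aestronglyMeasurable] at h
  exact h

lemma my_e_moment2 {e : Ω → ℝ} (hm : Measurable e) {v : ℝ≥0} (hv : v ≠ 0)
    (hlaw : P.map e = gaussianReal 0 v) : ∫ ω, e ω ^ 2 ∂P = (v : ℝ) := by
  have h := my_gauss_moment2 (v := v) hv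
  rw [← hlaw, integral_map hm.aemeasurable
    ((measurable_id'.pow_const 2).aestronglyMeasurable)] at h
  exact h

variable {ι : Type*} [Fintype ι]

lemma my_key (e : ι → Ω → ℝ) (hm : ∀ j, Measurable (e j))
    (hind : iIndepFun e P) {v : ℝ≥0} (hv : v ≠ 0)
    (hlaw : ∀ j, P.map (e j) = gaussianReal 0 v) (α : ι → ℝ) :
    Integrable (fun ω => (∑ j, α j * e j ω) ^ 2) P ∧
      ∫ ω, (∑ j, α j * e j ω) ^ 2 ∂P = (v : ℝ) * ∑ j, α j ^ 2 := by
  classical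
  have hL2 : ∀ j, MemLp (e j) 2 P := fun j => my_e_memLp2 (hm j) hv (hlaw j)
  have hint1 : ∀ j, Integrable (e j) P := fun j => (hL2 j).integrable one_le_two
  have hprod : ∀ j l, Integrable (fun ω => e j ω * e l ω) P := by
    intro j l
    by_cases hjl : j = l
    · subst hjl
      have := (memLp_two_iff_integrable_sq (hm j).aestronglyMeasurable).1 (hL2 j)
      simpa [pow_two] using this
    · exact (hind.indepFun hjl).integrable_mul (hint1 j) (hint1 l)
  have hE : ∀ j l, ∫ ω, e j ω * e l ω ∂P = if j = l then (v : ℝ) else 0 := by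
    intro j l
    by_cases hjl : j = l
    · subst hjl
      rw [if_pos rfl]
      have := my_e_moment2 (hm j) hv (hlaw j)
      simpa [pow_two] using this
    · rw [if_neg hjl]
      have h := (hind.indepFun hjl).integral_mul_eq_mul_integral (hm j).aestronglyMeasurable
        (hm l).aestronglyMeasurable
      have h2 : ∫ ω, e j ω * e l ω ∂P = (∫ ω, e j ω ∂P) * ∫ ω, e l ω ∂P := h
      rw [my_e_mean (hm j) hv (hlaw j), zero_mul] at h2
      exact h2
  have hexp : ∀ ω, (∑ j, α j * e j ω) ^ 2
      = ∑ j, ∑ l, (α j * α l) * (e j ω * e l ω) := by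
    intro ω
    rw [pow_two, Finset.sum_mul_sum]
    exact Finset.sum_congr rfl fun j _ => Finset.sum_congr rfl fun l _ => by ring
  have hintsum : ∀ j, Integrable (fun ω => ∑ l, (α j * α l) * (e j ω * e l ω)) P :=
    fun j => integrable_finset_sum _ fun l _ => (hprod j l).const_mul _
  constructor
  · have : (fun ω => (∑ j, α j * e j ω) ^ 2)
        = fun ω => ∑ j, ∑ l, (α j * α l) * (e j ω * e l ω) := funext hexp
    rw [this]
    exact integrable_finset_sum _ fun j _ => hintsum j
  · calc ∫ ω, (∑ j, α j * e j ω) ^ 2 ∂P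
        = ∫ ω, ∑ j, ∑ l, (α j * α l) * (e j ω * e l ω) ∂P := by
          exact integral_congr_ae (Filter.Eventually.of_forall fun ω => hexp ω)
      _ = ∑ j, ∑ l, (α j * α l) * ∫ ω, e j ω * e l ω ∂P := by
          rw [integral_finset_sum _ fun j _ => hintsum j]
          exact Finset.sum_congr rfl fun j _ => by
            rw [integral_finset_sum _ fun l _ => (hprod j l).const_mul _]
            exact Finset.sum_congr rfl fun l _ => integral_const_mul _ _
      _ = (v : ℝ) * ∑ j, α j ^ 2 := by
          simp_rw [hE, mul_ite, mul_zero, Finset.sum_ite_eq, Finset.mem_univ, if_pos]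
          rw [Finset.mul_sum]
          exact Finset.sum_congr rfl fun j _ => by ring

end Key


/-- Corollary 4: under the Gaussian approximation of the quantization error and the
orthogonality condition `Hᴴ·H = K·I`, the MSE of the zero-forcing-type estimator converges
to the floor `σ_q²/K` as the transmit SNR `ρ` tends to infinity. -/
theorem mse_zf_estimator_tendsto_floor (Ω : Type*) [MeasurableSpace Ω]
    (P : Measure Ω) [IsProbabilityMeasure P] (K Nt : ℕ) (hK : 1 ≤ K) (hNt : 1 ≤ Nt)
    (σq : ℝ) (hσq : 0 ≤ σq)
    (H : ℝ → Matrix (Fin K) (Fin Nt) ℂ)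
    (hH : ∀ ρ : ℝ, 0 < ρ → (H ρ)ᴴ * H ρ = (K : ℂ) • 1)
    (x : Fin Nt → ℂ)
    (a b : ℝ → Ω → Fin K → ℝ)
    (ham : ∀ ρ k, Measurable fun ω => a ρ ω k) (hbm : ∀ ρ k, Measurable fun ω => b ρ ω k)
    (hindep : ∀ ρ : ℝ, 0 < ρ → iIndepFun
      (Sum.elim (fun k ω => a ρ ω k) (fun k ω => b ρ ω k)) P)
    (hlawa : ∀ (ρ : ℝ), 0 < ρ → ∀ k, P.map (fun ω => a ρ ω k) =
      gaussianReal 0 (Real.toNNReal ((1 + σq ^ 2 * ρ / Nt) / 2)))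
    (hlawb : ∀ (ρ : ℝ), 0 < ρ → ∀ k, P.map (fun ω => b ρ ω k) =
      gaussianReal 0 (Real.toNNReal ((1 + σq ^ 2 * ρ / Nt) / 2)))
    (n' : ℝ → Ω → Fin K → ℂ) (hn' : ∀ ρ ω k, n' ρ ω k = a ρ ω k + b ρ ω k * Complex.I)
    (MSE : ℝ → ℝ)
    (hMSE : ∀ ρ : ℝ, MSE ρ = (1 / Nt : ℝ) * ∫ ω, ∑ i,
      ‖x i - (Real.sqrt (Nt / ρ) : ℂ) * (1 / K : ℂ) *
        (H ρ)ᴴ.mulVec (fun k => (Real.sqrt (ρ / Nt) : ℂ) * (H ρ).mulVec x k + n' ρ ω k) i‖ ^ 2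
      ∂P) :
    Tendsto MSE atTop (nhds (σq ^ 2 / K)) := by
  have hKpos : (0:ℝ) < K := by exact_mod_cast hK
  have hNtpos : (0:ℝ) < Nt := by exact_mod_cast hNt
  have hKC : ((K:ℂ)) ≠ 0 := by exact_mod_cast hKpos.ne'
  have hNtC : ((Nt:ℂ)) ≠ 0 := by exact_mod_cast hNtpos.ne'
  have hnormsq : ∀ z : ℂ, ‖z‖ ^ 2 = z.re ^ 2 + z.im ^ 2 := by
    intro z
    rw [Complex.sq_norm, Complex.normSq_apply]
    ring
  have hmain : ∀ ρ : ℝ, 0 < ρ → MSE ρ = (Nt:ℝ)/(ρ*K) + σq^2/K := by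
    intro ρ hρ
    set v : ℝ≥0 := Real.toNNReal ((1 + σq ^ 2 * ρ / Nt) / 2) with hvdef
    have harg : (0:ℝ) < (1 + σq ^ 2 * ρ / Nt) / 2 := by
      have h1 : (0:ℝ) ≤ σq ^ 2 * ρ / Nt := div_nonneg (mul_nonneg (sq_nonneg σq) hρ.le) hNtpos.le
      linarith
    have hvval : (v:ℝ) = (1 + σq ^ 2 * ρ / Nt) / 2 := Real.coe_toNNReal _ harg.le
    have hvne : v ≠ 0 := by
      rw [hvdef]
      exact (Real.toNNReal_pos.mpr harg).ne'
    set e : Fin K ⊕ Fin K → Ω → ℝ :=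
      Sum.elim (fun k ω => a ρ ω k) (fun k ω => b ρ ω k) with hedef
    have hm_e : ∀ j, Measurable (e j) := by rintro (k|k); exacts [ham ρ k, hbm ρ k]
    have hlaw_e : ∀ j, P.map (e j) = gaussianReal 0 v := by
      rintro (k|k); exacts [hlawa ρ hρ k, hlawb ρ hρ k]
    have hind_e : iIndepFun e P := hindep ρ hρ
    -- diagonal identity
    have hdiag : ∀ i : Fin Nt,
        ∑ k, (((H ρ)ᴴ i k).re ^ 2 + ((H ρ)ᴴ i k).im ^ 2) = (K:ℝ) := by
      intro i
      have h0 := congrFun (congrFun (hH ρ hρ) i) i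
      rw [Matrix.mul_apply] at h0
      have h1 : ∀ k : Fin K, (H ρ)ᴴ i k * H ρ k i
          = ((((H ρ)ᴴ i k).re ^ 2 + ((H ρ)ᴴ i k).im ^ 2 : ℝ) : ℂ) := by
        intro k
        have hk : H ρ k i = star ((H ρ)ᴴ i k) := by
          rw [Matrix.conjTranspose_apply, star_star]
        rw [hk, Complex.star_def, Complex.mul_conj, Complex.normSq_apply]
        push_cast
        ring
      rw [Finset.sum_congr rfl (fun k _ => h1 k), ← Complex.ofReal_sum] at h0
      have h2 : ((K:ℂ) • (1 : Matrix (Fin Nt) (Fin Nt) ℂ)) i i = (K:ℂ) := by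
        simp [Matrix.smul_apply, Matrix.one_apply_eq]
      rw [h2] at h0
      exact_mod_cast h0
    -- key integral per row
    have hTkey : ∀ i : Fin Nt,
        Integrable (fun ω => ‖∑ k, (H ρ)ᴴ i k * n' ρ ω k‖ ^ 2) P ∧
        ∫ ω, ‖∑ k, (H ρ)ᴴ i k * n' ρ ω k‖ ^ 2 ∂P
          = (v:ℝ) * (2 * ∑ k, (((H ρ)ᴴ i k).re ^ 2 + ((H ρ)ᴴ i k).im ^ 2)) := by
      intro i
      set αR : Fin K ⊕ Fin K → ℝ :=
        Sum.elim (fun k => ((H ρ)ᴴ i k).re) (fun k => -((H ρ)ᴴ i k).im) with hαR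
      set αI : Fin K ⊕ Fin K → ℝ :=
        Sum.elim (fun k => ((H ρ)ᴴ i k).im) (fun k => ((H ρ)ᴴ i k).re) with hαI
      have KR := my_key e hm_e hind_e hvne hlaw_e αR
      have KI := my_key e hm_e hind_e hvne hlaw_e αI
      have hfun : (fun ω => ‖∑ k, (H ρ)ᴴ i k * n' ρ ω k‖ ^ 2)
          = fun ω => (∑ j, αR j * e j ω) ^ 2 + (∑ j, αI j * e j ω) ^ 2 := by
        funext ω
        have hre : (∑ k, (H ρ)ᴴ i k * n' ρ ω k).re = ∑ j, αR j * e j ω := by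
          rw [Complex.re_sum, Fintype.sum_sum_type]
          simp only [hαR, hedef, Sum.elim_inl, Sum.elim_inr]
          rw [← Finset.sum_add_distrib]
          refine Finset.sum_congr rfl fun k _ => ?_
          rw [hn']
          simp only [Complex.mul_re, Complex.mul_im, Complex.add_re, Complex.add_im,
            Complex.ofReal_re, Complex.ofReal_im, Complex.I_re, Complex.I_im]
          ring
        have him : (∑ k, (H ρ)ᴴ i k * n' ρ ω k).im = ∑ j, αI j * e j ω := by
          rw [Complex.im_sum, Fintype.sum_sum_type]
          simp only [hαI, hedef, Sum.elim_inl, Sum.elim_inr]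
          rw [← Finset.sum_add_distrib]
          refine Finset.sum_congr rfl fun k _ => ?_
          rw [hn']
          simp only [Complex.mul_re, Complex.mul_im, Complex.add_re, Complex.add_im,
            Complex.ofReal_re, Complex.ofReal_im, Complex.I_re, Complex.I_im]
          ring
        rw [hnormsq, hre, him]
      constructor
      · rw [hfun]; exact KR.1.add KI.1
      · rw [hfun, integral_add KR.1 KI.1, KR.2, KI.2, ← mul_add]
        congr 1
        rw [hαR, hαI, Fintype.sum_sum_type, Fintype.sum_sum_type]
        simp only [Sum.elim_inl, Sum.elim_inr, neg_sq]
        rw [Finset.mul_sum, ← Finset.sum_add_distrib, ← Finset.sum_add_distrib,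
          ← Finset.sum_add_distrib]
        exact Finset.sum_congr rfl fun k _ => by ring
    -- pointwise simplification of the estimator error
    have hpt : ∀ ω, ∀ i : Fin Nt,
        x i - (Real.sqrt (Nt / ρ) : ℂ) * (1 / K : ℂ) *
          (H ρ)ᴴ.mulVec (fun k => (Real.sqrt (ρ / Nt) : ℂ) * (H ρ).mulVec x k + n' ρ ω k) i
        = -((Real.sqrt (Nt / ρ) : ℂ) * (1 / K : ℂ)) * ∑ k, (H ρ)ᴴ i k * n' ρ ω k := by
      intro ω i
      have hvec : (fun k => (Real.sqrt (ρ / Nt) : ℂ) * (H ρ).mulVec x k + n' ρ ω k)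
          = ((Real.sqrt (ρ / Nt) : ℂ) • ((H ρ).mulVec x) + n' ρ ω) := rfl
      rw [hvec, Matrix.mulVec_add, Matrix.mulVec_smul, Matrix.mulVec_mulVec, hH ρ hρ,
        Matrix.smul_mulVec, Matrix.one_mulVec]
      have hs : (Real.sqrt (Nt / ρ) : ℂ) * (Real.sqrt (ρ / Nt) : ℂ) = 1 := by
        rw [← Complex.ofReal_mul, ← Real.sqrt_mul (by positivity)]
        rw [show ((Nt:ℝ)/ρ) * (ρ/Nt) = 1 from by field_simp]
        simp
      have hmv : (H ρ)ᴴ.mulVec (n' ρ ω) i = ∑ k, (H ρ)ᴴ i k * n' ρ ω k := rfl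
      simp only [Pi.add_apply, Pi.smul_apply, smul_eq_mul, hmv]
      have h1K : (1:ℂ)/(K:ℂ) * (K:ℂ) = 1 := by field_simp
      linear_combination (-((1:ℂ)/(K:ℂ) * (K:ℂ) * x i)) * hs - x i * h1K
    rw [hMSE ρ]
    have hSfun : (fun ω => ∑ i, ‖x i - (Real.sqrt (Nt / ρ) : ℂ) * (1 / K : ℂ) *
          (H ρ)ᴴ.mulVec (fun k => (Real.sqrt (ρ / Nt) : ℂ) * (H ρ).mulVec x k + n' ρ ω k) i‖ ^ 2)
        = fun ω => ((Nt:ℝ)/ρ)/(K:ℝ)^2 * ∑ i, ‖∑ k, (H ρ)ᴴ i k * n' ρ ω k‖ ^ 2 := by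
      funext ω
      rw [Finset.mul_sum]
      refine Finset.sum_congr rfl fun i _ => ?_
      rw [hpt ω i, norm_mul, norm_neg, norm_mul, mul_pow, mul_pow]
      congr 1
      rw [Complex.norm_real, Real.norm_eq_abs, abs_of_nonneg (Real.sqrt_nonneg _),
        Real.sq_sqrt (by positivity), norm_div, norm_one, Complex.norm_natCast]
      field_simp
    rw [hSfun, integral_const_mul, integral_finset_sum _ (fun i _ => (hTkey i).1)]
    rw [Finset.sum_congr rfl (fun i _ => (hTkey i).2)]
    rw [Finset.sum_congr rfl (fun i (_ : i ∈ Finset.univ) => by rw [hdiag i])]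
    rw [Finset.sum_const, Finset.card_univ, Fintype.card_fin, nsmul_eq_mul]
    rw [hvval]
    field_simp
  have hlim : Filter.Tendsto (fun ρ : ℝ => (Nt:ℝ)/(ρ*K) + σq^2/K) Filter.atTop
      (nhds (σq ^ 2 / K)) := by
    have h1 : Filter.Tendsto (fun ρ:ℝ => (Nt:ℝ)/(ρ*K)) Filter.atTop (nhds 0) := by
      have h2 := (tendsto_inv_atTop_zero (𝕜 := ℝ)).const_mul ((Nt:ℝ)/K)
      rw [mul_zero] at h2
      refine h2.congr fun ρ => ?_
      ring
    have := h1.add (tendsto_const_nhds (x := σq^2/(K:ℝ)) (f := Filter.atTop))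
    simpa using this
  refine Filter.Tendsto.congr' ?_ hlim
  filter_upwards [Filter.eventually_gt_atTop 0] with ρ hρ
  exact (hmain ρ hρ).symm
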